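/- If the Bregman function h satisfies σ/2·‖x - y‖² ≤ D_h(x, y) ≤ L/2·‖x - y‖² for all x, y (with 0 < σ ≤ L), then D_h satisfies the triangle scaling property with constant G = L/σ: for all λ, λ₁, λ₂ and θ ∈ [0,1], D_h((1-θ)λ + θλ₁, (1-θ)λ + θλ₂) ≤ (L/σ)·θ²·D_h(λ₁, λ₂). -/

import Mathlib

open RealInnerProductSpace

theorem triangle_scaling_of_smooth_strongly_convex {n : ℕ}
    (h : EuclideanSpace ℝ (Fin n) → ℝ)
    (h' : EuclideanSpace ℝ (Fin n) → EuclideanSpace ℝ (Fin n))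
    (hdiff : ∀ x, HasGradientAt h (h' x) x)
    (D : EuclideanSpace ℝ (Fin n) → EuclideanSpace ℝ (Fin n) → ℝ)
    (hD : ∀ x y, D x y = h x - h y - ⟪h' y, x - y⟫)
    (σ L : ℝ) (hσ : 0 < σ) (hσL : σ ≤ L)
    (hlower : ∀ x y, σ / 2 * ‖x - y‖ ^ 2 ≤ D x y)
    (hupper : ∀ x y, D x y ≤ L / 2 * ‖x - y‖ ^ 2) :
    ∀ (lam lam₁ lam₂ : EuclideanSpace ℝ (Fin n)) (θ : ℝ), 0 ≤ θ → θ ≤ 1 →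
      D ((1 - θ) • lam + θ • lam₁) ((1 - θ) • lam + θ • lam₂) ≤ L / σ * θ ^ 2 * D lam₁ lam₂ := by
  intro lam lam₁ lam₂ θ hθ0 hθ1
  have hdiffeq : ((1 - θ) • lam + θ • lam₁) - ((1 - θ) • lam + θ • lam₂)
      = θ • (lam₁ - lam₂) := by
    module
  have h1 := hupper ((1 - θ) • lam + θ • lam₁) ((1 - θ) • lam + θ • lam₂)
  rw [hdiffeq, norm_smul, Real.norm_eq_abs, abs_of_nonneg hθ0, mul_pow] at h1
  have h2 := hlower lam₁ lam₂
  calc D ((1 - θ) • lam + θ • lam₁) ((1 - θ) • lam + θ • lam₂)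
      ≤ L / 2 * (θ ^ 2 * ‖lam₁ - lam₂‖ ^ 2) := h1
    _ = L / σ * θ ^ 2 * (σ / 2 * ‖lam₁ - lam₂‖ ^ 2) := by
        field_simp
    _ ≤ L / σ * θ ^ 2 * D lam₁ lam₂ := by
        apply mul_le_mul_of_nonneg_left h2
        have hL : (0:ℝ) < L := hσ.trans_le hσL
        positivity
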